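/- Let S be a nonempty finite set of points in the Euclidean plane ℝ² and let Ψ : ℝ² → ℝ be a function that is monotone in the distances to the points of S, i.e., whenever two points z, z' ∈ ℝ² satisfy dist(z, q) ≤ dist(z', q) for every q ∈ S, then Ψ(z) ≤ Ψ(z'). Then for every point z' ∈ ℝ² with z' ∉ convexHull ℝ S there exists a point z ∈ convexHull ℝ S with Ψ(z) ≤ Ψ(z'). (In particular, the optimal relay position minimizing any such distance-monotone cost, e.g. the total network power for a target multicast flow, can be taken inside the convex hull of the nodes — Proposition 1, min-cost part.) -/

import Mathlib

/-- Proposition 1 (min-cost part): for a distance-monotone cost `Ψ`, any point outside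
the convex hull of the node set `S` is dominated by some point inside the convex hull. -/
theorem relay_in_convexHull_mincost
    (S : Set (EuclideanSpace ℝ (Fin 2))) (hSfin : S.Finite) (hSne : S.Nonempty)
    (Ψ : EuclideanSpace ℝ (Fin 2) → ℝ)
    (hΨ : ∀ z z' : EuclideanSpace ℝ (Fin 2),
      (∀ q ∈ S, dist z q ≤ dist z' q) → Ψ z ≤ Ψ z')
    (z' : EuclideanSpace ℝ (Fin 2)) (hz' : z' ∉ convexHull ℝ S) :
    ∃ z ∈ convexHull ℝ S, Ψ z ≤ Ψ z' := by
  set K := convexHull ℝ S with hK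
  have hKconv : Convex ℝ K := convex_convexHull ℝ S
  have hKcomp : IsCompact K := hSfin.isCompact_convexHull (𝕜 := ℝ)
  have hKne : K.Nonempty := hSne.mono (subset_convexHull ℝ S)
  have hKcomplete : IsComplete K := hKcomp.isClosed.isComplete
  obtain ⟨p, hpK, hproj⟩ :=
    exists_norm_eq_iInf_of_complete_convex hKne hKcomplete hKconv z'
  have hinner := (norm_eq_iInf_iff_real_inner_le_zero hKconv hpK).mp hproj
  refine ⟨p, hpK, hΨ p z' ?_⟩
  intro q hq
  have hqK : q ∈ K := subset_convexHull ℝ S hq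
  have h1 : (inner ℝ (z' - p) (q - p) : ℝ) ≤ 0 := hinner q hqK
  have h2 : dist p q ^ 2 ≤ dist z' q ^ 2 := by
    have e : z' - q = (z' - p) + (p - q) := by abel
    rw [dist_eq_norm, dist_eq_norm, e]
    rw [← real_inner_self_eq_norm_sq, ← real_inner_self_eq_norm_sq]
    have h3 : (inner ℝ (z' - p) (p - q) : ℝ) ≥ 0 := by
      have : p - q = -(q - p) := by abel
      rw [this, inner_neg_right]; linarith
    rw [real_inner_add_add_self]
    nlinarith [real_inner_self_nonneg (x := z' - p)]
  nlinarith [dist_nonneg (x := p) (y := q), dist_nonneg (x := z') (y := q)]
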